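/- Binary robustness certificate: let f(x) = ⟨w, φ_D(x)⟩ with w ≠ 0, where φ_D has an encoder gap τ_s(x) > 2ν on input x, D is s-RIP with constant η_s < 1, and the normalized margin satisfies f(x) ≥ ρ_x‖w‖₂ with ρ_x > ν/√(1−η_s). Then for every v with ‖v‖₂ ≤ ν, sign(⟨w, φ_D(x+v)⟩) = sign(⟨w, φ_D(x)⟩). -/
import Mathlib


open scoped BigOperators
open Finset

noncomputable def l2 {n : ℕ} (x : Fin n → ℝ) : ℝ := Real.sqrt (∑ i, (x i) ^ 2)

noncomputable def l1 {n : ℕ} (x : Fin n → ℝ) : ℝ := ∑ i, |x i|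

noncomputable def inp {n : ℕ} (x y : Fin n → ℝ) : ℝ := ∑ i, x i * y i

/-- The Lasso objective `z ↦ (1/2)‖x − Dz‖₂² + λ‖z‖₁`. -/
noncomputable def lassoObj {d p : ℕ} (D : Matrix (Fin d) (Fin p) ℝ) (lam : ℝ)
    (x : Fin d → ℝ) (z : Fin p → ℝ) : ℝ :=
  (1 / 2) * (l2 (x - D.mulVec z)) ^ 2 + lam * l1 z

lemma l2_sq {n : ℕ} (x : Fin n → ℝ) : (l2 x) ^ 2 = ∑ i, (x i) ^ 2 :=
  Real.sq_sqrt (by positivity)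


lemma l2_nonneg {n : ℕ} (x : Fin n → ℝ) : 0 ≤ l2 x := Real.sqrt_nonneg _

lemma inp_le {n : ℕ} (x y : Fin n → ℝ) : inp x y ≤ l2 x * l2 y :=
  Real.sum_mul_le_sqrt_mul_sqrt _ _ _

lemma l2_neg {n : ℕ} (x : Fin n → ℝ) : l2 (fun i => - x i) = l2 x := by
  unfold l2; congr 1; apply Finset.sum_congr rfl; intro i _; ring

lemma abs_inp_le {n : ℕ} (x y : Fin n → ℝ) : |inp x y| ≤ l2 x * l2 y := by
  rw [abs_le]
  constructor
  · have h := inp_le (fun i => - x i) y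
    rw [l2_neg] at h
    unfold inp at *
    have heq : ∑ i, (fun i => - x i) i * y i = - ∑ i, x i * y i := by
      rw [← Finset.sum_neg_distrib]; apply Finset.sum_congr rfl; intro i _; ring
    rw [heq] at h
    linarith
  · exact inp_le x y

lemma lasso_kkt {d p : ℕ} (D : Matrix (Fin d) (Fin p) ℝ) (lam : ℝ) (hlam : 0 < lam)
    (hcols : ∀ i, l2 (fun r => D r i) = 1)
    (u : Fin d → ℝ) (α : Fin p → ℝ)
    (hmin : ∀ z, lassoObj D lam u α ≤ lassoObj D lam u z) (i : Fin p) :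
    |inp (fun r => D r i) (u - D.mulVec α)| ≤ lam ∧
      inp (fun r => D r i) (u - D.mulVec α) * α i = lam * |α i| := by
  set c : ℝ := inp (fun r => D r i) (u - D.mulVec α) with hc
  -- column norm
  have hcol : ∑ r, (D r i) ^ 2 = 1 := by
    have h := hcols i
    have h2 : (l2 (fun r => D r i)) ^ 2 = 1 := by rw [h]; norm_num
    rw [l2_sq] at h2
    exact h2
  -- the key variational inequality
  have hE : ∀ t : ℝ, t * c ≤ t ^ 2 / 2 + lam * (|α i + t| - |α i|) := by
    intro t
    have hm := hmin (fun j => α j + if j = i then t else 0)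
    have hz : ∀ r, (u - D.mulVec (fun j => α j + if j = i then t else 0)) r
        = (u - D.mulVec α) r - t * D r i := by
      intro r
      simp only [Pi.sub_apply, Matrix.mulVec, dotProduct, mul_add, mul_ite, mul_zero,
        Finset.sum_add_distrib, Finset.sum_ite_eq', Finset.mem_univ, if_true]
      ring
    have hA : (l2 (u - D.mulVec (fun j => α j + if j = i then t else 0))) ^ 2
        = (l2 (u - D.mulVec α)) ^ 2 - 2 * t * c + t ^ 2 := by
      rw [l2_sq, l2_sq]
      have : ∀ r : Fin d, ((u - D.mulVec (fun j => α j + if j = i then t else 0)) r) ^ 2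
          = ((u - D.mulVec α) r) ^ 2
            - 2 * t * (D r i * (u - D.mulVec α) r) + t ^ 2 * (D r i) ^ 2 := by
        intro r; rw [hz r]; ring
      rw [Finset.sum_congr rfl (fun r _ => this r)]
      rw [Finset.sum_add_distrib, Finset.sum_sub_distrib, ← Finset.mul_sum, ← Finset.mul_sum,
        hcol, hc]
      unfold inp
      ring
    have hL : l1 (fun j => α j + if j = i then t else 0)
        = l1 α + (|α i + t| - |α i|) := by
      unfold l1
      have : ∀ j : Fin p, |α j + if j = i then t else 0|
          = |α j| + (if j = i then |α i + t| - |α i| else 0) := by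
        intro j
        by_cases hj : j = i
        · subst hj; simp
        · simp [hj]
      rw [Finset.sum_congr rfl (fun j _ => this j), Finset.sum_add_distrib,
        Finset.sum_ite_eq']
      simp
    unfold lassoObj at hm
    rw [hA, hL] at hm
    nlinarith [hm]
  -- |c| ≤ lam
  have habs : |c| ≤ lam := by
    rw [abs_le]
    constructor
    · by_contra hlt
      push_neg at hlt
      have ht := hE (c + lam)
      have h1 : |α i + (c + lam)| - |α i| ≤ |c + lam| := by
        have := abs_sub_abs_le_abs_sub (α i + (c + lam)) (α i)
        simpa using this
      have hneg : c + lam < 0 := by linarith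
      rw [abs_of_neg hneg] at h1
      have h2 : lam * (|α i + (c + lam)| - |α i|) ≤ lam * (-(c + lam)) :=
        mul_le_mul_of_nonneg_left h1 hlam.le
      nlinarith [mul_pos (neg_pos.2 hneg) (neg_pos.2 hneg)]
    · by_contra hlt
      push_neg at hlt
      have ht := hE (c - lam)
      have h1 : |α i + (c - lam)| - |α i| ≤ |c - lam| := by
        have := abs_sub_abs_le_abs_sub (α i + (c - lam)) (α i)
        simpa using this
      have hpos : 0 < c - lam := by linarith
      rw [abs_of_pos hpos] at h1
      have h2 : lam * (|α i + (c - lam)| - |α i|) ≤ lam * (c - lam) :=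
        mul_le_mul_of_nonneg_left h1 hlam.le
      nlinarith [mul_pos hpos hpos]
  refine ⟨habs, ?_⟩
  rcases lt_trichotomy (α i) 0 with hαi | hαi | hαi
  · -- show c = -lam
    have hcle : -lam ≤ c := (abs_le.1 habs).1
    have : c = -lam := by
      by_contra hne
      have hclt : -lam < c := lt_of_le_of_ne hcle (Ne.symm hne)
      set t : ℝ := min (-(α i)) (2 * (c + lam)) / 2 with htdef
      have ht0 : 0 < t := by
        have h1 : 0 < min (-(α i)) (2 * (c + lam)) :=
          lt_min (by linarith) (by linarith)
        positivity
      have htα : α i + t < 0 := by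
        have := min_le_left (-(α i)) (2 * (c + lam))
        have : t ≤ -(α i) / 2 := by rw [htdef]; linarith
        linarith
      have ht2 : t < 2 * (c + lam) := by
        have := min_le_right (-(α i)) (2 * (c + lam))
        have : t ≤ c + lam := by rw [htdef]; linarith
        linarith
      have ht := hE t
      rw [abs_of_neg htα, abs_of_neg hαi] at ht
      nlinarith [mul_pos ht0 (show 0 < c + lam - t / 2 by linarith)]
    rw [this, abs_of_neg hαi]; ring
  · simp [hαi]
  · -- show c = lam
    have hcle : c ≤ lam := (abs_le.1 habs).2
    have : c = lam := by
      by_contra hne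
      have hclt : c < lam := lt_of_le_of_ne hcle hne
      set t : ℝ := max (-(α i)) (2 * (c - lam)) / 2 with htdef
      have ht0 : t < 0 := by
        have h1 : max (-(α i)) (2 * (c - lam)) < 0 :=
          max_lt (by linarith) (by linarith)
        linarith
      have htα : 0 < α i + t := by
        have := le_max_left (-(α i)) (2 * (c - lam))
        have : -(α i) / 2 ≤ t := by rw [htdef]; linarith
        linarith
      have ht2 : 2 * (c - lam) < t := by
        have := le_max_right (-(α i)) (2 * (c - lam))
        have : c - lam ≤ t := by rw [htdef]; linarith
        linarith
      have ht := hE t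
      rw [abs_of_pos htα, abs_of_pos hαi] at ht
      nlinarith [mul_pos (neg_pos.2 ht0) (show 0 < lam + t / 2 - c by linarith)]
    rw [this, abs_of_pos hαi]

lemma sq_le_imp_le {a b : ℝ} (ha : 0 ≤ a) (hb : 0 ≤ b) (h : a ^ 2 ≤ b ^ 2) : a ≤ b := by
  nlinarith

lemma mul_self_le_imp {T n : ℝ} (hT : 0 ≤ T) (hn : 0 ≤ n) (h : T ^ 2 ≤ n * T) : T ≤ n := by
  nlinarith

lemma rip_div_bound {T k n e : ℝ} (hT : 0 ≤ T) (hn : 0 ≤ n) (hk : 0 < k)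
    (hk2 : k ^ 2 = 1 - e) (h : (1 - e) * T ^ 2 ≤ n ^ 2) : T ≤ n / k := by
  rw [le_div_iff₀ hk]
  nlinarith [mul_nonneg hT hk.le]

/-- binary robustness certificate for the supervised sparse coding model. -/
theorem stmt12 {d p s : ℕ} (D : Matrix (Fin d) (Fin p) ℝ) (lam ν η : ℝ)
    (hlam : 0 < lam) (hν : 0 ≤ ν) (hη0 : 0 ≤ η) (hη : η < 1)
    (hcols : ∀ i, l2 (fun r => D r i) = 1)
    (hRIP : ∀ z : Fin p → ℝ, (Finset.univ.filter (fun i => z i ≠ 0)).card ≤ s →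
      (1 - η) * (l2 z) ^ 2 ≤ (l2 (D.mulVec z)) ^ 2)
    (φ : (Fin d → ℝ) → Fin p → ℝ)
    (hφ : ∀ u z, lassoObj D lam u (φ u) ≤ lassoObj D lam u z)
    (x : Fin d → ℝ) (hx : l2 x ≤ 1)
    (hgap : ∃ I : Finset (Fin p), I.card = p - s ∧
      ∀ i ∈ I, 2 * ν < lam - |inp (fun r => D r i) (x - D.mulVec (φ x))|)
    (w : Fin p → ℝ) (hw : w ≠ 0) (ρ : ℝ)
    (hρ : ν / Real.sqrt (1 - η) < ρ)
    (hmargin : ρ * l2 w ≤ inp w (φ x)) :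
    ∀ v : Fin d → ℝ, l2 v ≤ ν →
      Real.sign (inp w (φ (x + v))) = Real.sign (inp w (φ x)) := by
  intro v hv
  obtain ⟨I, hIcard, hIgap⟩ := hgap
  set α : Fin p → ℝ := φ x with hαdef
  set β : Fin p → ℝ := φ (x + v) with hβdef
  set c : Fin p → ℝ := fun i => inp (fun r => D r i) (x - D.mulVec α) with hcdef
  set c' : Fin p → ℝ := fun i => inp (fun r => D r i) ((x + v) - D.mulVec β) with hc'def
  have hK : ∀ i, |c i| ≤ lam ∧ c i * α i = lam * |α i| :=
    fun i => lasso_kkt D lam hlam hcols x α (hφ x) i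
  have hK' : ∀ i, |c' i| ≤ lam ∧ c' i * β i = lam * |β i| :=
    fun i => lasso_kkt D lam hlam hcols (x + v) β (hφ (x + v)) i
  set δ : Fin p → ℝ := fun j => β j - α j with hδdef
  -- mulVec of δ
  have hDδ : ∀ r, D.mulVec δ r = D.mulVec β r - D.mulVec α r := by
    intro r
    simp only [hδdef, Matrix.mulVec, dotProduct, mul_sub]
    rw [Finset.sum_sub_distrib]
  -- c i - c' i identity
  have hdiff : ∀ i, c i - c' i = ∑ r, D r i * (D.mulVec δ r - v r) := by
    intro i
    simp only [hcdef, hc'def]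
    unfold inp
    rw [← Finset.sum_sub_distrib]
    apply Finset.sum_congr rfl
    intro r _
    have := hDδ r
    simp only [Pi.sub_apply, Pi.add_apply]
    rw [this]
    ring
  -- monotonicity of the subdifferential: each term ≤ 0
  have hterm : ∀ i, δ i * (c i - c' i) ≤ 0 := by
    intro i
    have h1 := (hK i).2
    have h2 := (hK' i).2
    have h3 := (hK i).1
    have h4 := (hK' i).1
    have e1 : β i * c i ≤ lam * |β i| := by
      calc β i * c i ≤ |β i * c i| := le_abs_self _
        _ = |β i| * |c i| := abs_mul _ _
        _ ≤ |β i| * lam := mul_le_mul_of_nonneg_left h3 (abs_nonneg _)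
        _ = lam * |β i| := mul_comm _ _
    have e2 : α i * c' i ≤ lam * |α i| := by
      calc α i * c' i ≤ |α i * c' i| := le_abs_self _
        _ = |α i| * |c' i| := abs_mul _ _
        _ ≤ |α i| * lam := mul_le_mul_of_nonneg_left h4 (abs_nonneg _)
        _ = lam * |α i| := mul_comm _ _
    have expand : δ i * (c i - c' i)
        = β i * c i - c' i * β i - c i * α i + α i * c' i := by
      simp only [hδdef]; ring
    rw [expand, h1, h2]
    linarith
  -- ⟨Dδ, Dδ - v⟩ ≤ 0
  have hswap : ∑ r, D.mulVec δ r * (D.mulVec δ r - v r) = ∑ j, δ j * (c j - c' j) := by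
    have step1 : ∀ r, D.mulVec δ r * (D.mulVec δ r - v r)
        = ∑ j, δ j * (D r j * (D.mulVec δ r - v r)) := by
      intro r
      calc D.mulVec δ r * (D.mulVec δ r - v r)
          = (∑ j, D r j * δ j) * (D.mulVec δ r - v r) := by
            congr 1
        _ = ∑ j, δ j * (D r j * (D.mulVec δ r - v r)) := by
            rw [Finset.sum_mul]; apply Finset.sum_congr rfl; intro j _; ring
    rw [Finset.sum_congr rfl (fun r _ => step1 r), Finset.sum_comm]
    apply Finset.sum_congr rfl
    intro j _
    rw [hdiff j, Finset.mul_sum]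
  have hmono : ∑ r, D.mulVec δ r * (D.mulVec δ r - v r) ≤ 0 := by
    rw [hswap]
    exact Finset.sum_nonpos (fun j _ => hterm j)
  -- ‖Dδ‖² ≤ ⟨v, Dδ⟩
  have hP : ∑ r, (D.mulVec δ r) ^ 2 ≤ inp v (D.mulVec δ) := by
    unfold inp
    have : ∑ r, D.mulVec δ r * (D.mulVec δ r - v r)
        = ∑ r, (D.mulVec δ r) ^ 2 - ∑ r, v r * D.mulVec δ r := by
      rw [← Finset.sum_sub_distrib]
      apply Finset.sum_congr rfl; intro r _; ring
    linarith [this ▸ hmono]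
  have hPnn : 0 ≤ ∑ r, (D.mulVec δ r) ^ 2 := Finset.sum_nonneg fun r _ => sq_nonneg _
  have hQ : inp v (D.mulVec δ) ≤ ν * l2 (D.mulVec δ) := by
    calc inp v (D.mulVec δ) ≤ l2 v * l2 (D.mulVec δ) := inp_le _ _
      _ ≤ ν * l2 (D.mulVec δ) := mul_le_mul_of_nonneg_right hv (l2_nonneg _)
  have hDsq : (l2 (D.mulVec δ)) ^ 2 = ∑ r, (D.mulVec δ r) ^ 2 := l2_sq _
  -- ‖Dδ‖ ≤ ν
  have hDν : l2 (D.mulVec δ) ≤ ν := by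
    apply mul_self_le_imp (l2_nonneg _) hν
    rw [hDsq]
    calc ∑ r, (D.mulVec δ r) ^ 2 ≤ inp v (D.mulVec δ) := hP
      _ ≤ ν * l2 (D.mulVec δ) := hQ
  -- ‖Dδ - v‖ ≤ ν
  have hgν : l2 (fun r => D.mulVec δ r - v r) ≤ ν := by
    have hexp : ∑ r, (D.mulVec δ r - v r) ^ 2
        = ∑ r, (D.mulVec δ r) ^ 2 - 2 * inp v (D.mulVec δ) + ∑ r, (v r) ^ 2 := by
      unfold inp
      rw [Finset.mul_sum, ← Finset.sum_sub_distrib, ← Finset.sum_add_distrib]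
      apply Finset.sum_congr rfl; intro r _; ring
    have hvsq : ∑ r, (v r) ^ 2 ≤ ν ^ 2 := by
      rw [← l2_sq v]
      exact pow_le_pow_left₀ (l2_nonneg v) hv 2
    have hsq : (l2 (fun r => D.mulVec δ r - v r)) ^ 2 ≤ ν ^ 2 := by
      rw [l2_sq]
      have hQnn : 0 ≤ inp v (D.mulVec δ) := le_trans hPnn hP
      linarith [hexp, hP, hvsq]
    exact sq_le_imp_le (l2_nonneg _) hν hsq
  -- support of δ is contained in Iᶜ
  have hsupp : ∀ i ∈ I, δ i = 0 := by
    intro i hi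
    have hgapi : 2 * ν < lam - |c i| := hIgap i hi
    have hα0 : α i = 0 := by
      by_contra hne
      have h1 : c i * α i ≤ |c i| * |α i| := by
        calc c i * α i ≤ |c i * α i| := le_abs_self _
          _ = |c i| * |α i| := abs_mul _ _
      have h2 : 0 < |α i| := abs_pos.2 hne
      nlinarith [(hK i).2]
    have hβ0 : β i = 0 := by
      have hdi : c' i - c i = inp (fun r => D r i) (fun r => v r - D.mulVec δ r) := by
        simp only [hcdef, hc'def]
        unfold inp
        rw [← Finset.sum_sub_distrib]
        apply Finset.sum_congr rfl
        intro r _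
        have := hDδ r
        simp only [Pi.sub_apply, Pi.add_apply]
        rw [this]
        ring
      have hcs : |inp (fun r => D r i) (fun r => v r - D.mulVec δ r)| ≤ ν := by
        have h1 := abs_inp_le (fun r => D r i) (fun r => v r - D.mulVec δ r)
        have h2 : l2 (fun r => v r - D.mulVec δ r) = l2 (fun r => D.mulVec δ r - v r) := by
          have : (fun r => v r - D.mulVec δ r) = (fun r => -(D.mulVec δ r - v r)) := by
            funext r; ring
          rw [this, l2_neg]
        rw [hcols i, one_mul, h2] at h1
        linarith [hgν]
      have hc'lt : |c' i| < lam := by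
        have : |c' i| ≤ |c i| + |c' i - c i| := by
          calc |c' i| = |c i + (c' i - c i)| := by ring_nf
            _ ≤ |c i| + |c' i - c i| := abs_add_le _ _
        rw [hdi] at this
        linarith [hcs, hν]
      by_contra hne
      have h1 : c' i * β i ≤ |c' i| * |β i| := by
        calc c' i * β i ≤ |c' i * β i| := le_abs_self _
          _ = |c' i| * |β i| := abs_mul _ _
      have h2 : 0 < |β i| := abs_pos.2 hne
      nlinarith [(hK' i).2]
    simp [hδdef, hα0, hβ0]
  -- sparsity of δ
  have hcard : (Finset.univ.filter (fun i => δ i ≠ 0)).card ≤ s := by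
    have hsub : (Finset.univ.filter (fun i => δ i ≠ 0)) ⊆ Iᶜ := by
      intro i hi
      rw [Finset.mem_filter] at hi
      rw [Finset.mem_compl]
      intro hiI
      exact hi.2 (hsupp i hiI)
    have h1 := Finset.card_le_card hsub
    rw [Finset.card_compl, hIcard, Fintype.card_fin] at h1
    omega
  -- RIP bound
  have hrip := hRIP δ hcard
  have hk : 0 < Real.sqrt (1 - η) := Real.sqrt_pos.2 (by linarith)
  have hk2 : (Real.sqrt (1 - η)) ^ 2 = 1 - η := Real.sq_sqrt (by linarith)
  have hδν : l2 δ ≤ ν / Real.sqrt (1 - η) := by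
    have hDsq2 : (l2 (D.mulVec δ)) ^ 2 ≤ ν ^ 2 :=
      pow_le_pow_left₀ (l2_nonneg _) hDν 2
    exact rip_div_bound (l2_nonneg δ) hν hk hk2 (le_trans hrip hDsq2)
  -- positivity of both inner products
  have hw2 : 0 < l2 w := by
    obtain ⟨j, hj⟩ := Function.ne_iff.1 hw
    unfold l2
    apply Real.sqrt_pos.2
    apply Finset.sum_pos' (fun i _ => sq_nonneg _)
    exact ⟨j, Finset.mem_univ j, (even_two.pow_pos_iff two_ne_zero).2 hj⟩
  have hρ0 : 0 < ρ := lt_of_le_of_lt (div_nonneg hν hk.le) hρ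
  have habsδ : |inp w δ| < ρ * l2 w := by
    have h1 := abs_inp_le w δ
    have h2 : l2 w * l2 δ ≤ l2 w * (ν / Real.sqrt (1 - η)) :=
      mul_le_mul_of_nonneg_left hδν (l2_nonneg w)
    have h3 : l2 w * (ν / Real.sqrt (1 - η)) < l2 w * ρ :=
      mul_lt_mul_of_pos_left hρ hw2
    have h4 : l2 w * ρ = ρ * l2 w := mul_comm _ _
    linarith
  have hsplit : inp w β = inp w α + inp w δ := by
    unfold inp
    rw [← Finset.sum_add_distrib]
    apply Finset.sum_congr rfl
    intro j _
    simp only [hδdef]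
    ring
  have hposα : 0 < inp w α := lt_of_lt_of_le (mul_pos hρ0 hw2) hmargin
  have hposβ : 0 < inp w β := by
    have := neg_abs_le (inp w δ)
    rw [hsplit]
    linarith
  rw [Real.sign_of_pos hposβ, Real.sign_of_pos hposα]
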